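/- Let d, n, m be positive integers, let W be a real m×d matrix, X a real d×n matrix, O a real n×n matrix, and L̂, D̂ real m×n matrices, and let α > 0, γ > 0, η > 0 be real numbers. Define f(D) = α‖WX − D‖_F² + γ‖DO − L̂‖_F² + η‖D − D̂‖_F² for real m×n matrices D. Then the n×n matrix M = 2(α+η)I + 2γOOᵀ is positive definite (hence invertible), and D* = (2αWX + 2γL̂Oᵀ + 2ηD̂)·M⁻¹ is the unique global minimizer of f; that is, f(D*) ≤ f(D) for every real m×n matrix D, with equality only if D = D*. -/

import Mathlib

open Matrix

/-- Squared Frobenius norm of a real matrix: `‖A‖_F² = trace (Aᵀ A)`. -/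
noncomputable def frobSq {m n : ℕ} (A : Matrix (Fin m) (Fin n) ℝ) : ℝ :=
  Matrix.trace (Aᵀ * A)

namespace BLDLaux

lemma tr_sym {m n : ℕ} (A B : Matrix (Fin m) (Fin n) ℝ) :
    Matrix.trace (Bᵀ * A) = Matrix.trace (Aᵀ * B) := by
  rw [← Matrix.trace_transpose (Bᵀ * A), Matrix.transpose_mul, Matrix.transpose_transpose]

lemma cyc1 {m n : ℕ} (P E : Matrix (Fin m) (Fin n) ℝ) (O : Matrix (Fin n) (Fin n) ℝ) :
    Matrix.trace ((P * Oᵀ)ᵀ * E) = Matrix.trace (Pᵀ * (E * O)) := by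
  rw [Matrix.transpose_mul, Matrix.transpose_transpose, Matrix.mul_assoc,
    Matrix.trace_mul_comm, Matrix.mul_assoc]

lemma frob_sub {m n : ℕ} (A B : Matrix (Fin m) (Fin n) ℝ) :
    frobSq (A - B) = frobSq A - 2 * Matrix.trace (Aᵀ * B) + frobSq B := by
  simp only [frobSq, Matrix.transpose_sub, Matrix.sub_mul, Matrix.mul_sub,
    Matrix.trace_sub]
  rw [tr_sym B A]
  ring

lemma frob_add {m n : ℕ} (A B : Matrix (Fin m) (Fin n) ℝ) :
    frobSq (A + B) = frobSq A + 2 * Matrix.trace (Aᵀ * B) + frobSq B := by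
  simp only [frobSq, Matrix.transpose_add, Matrix.add_mul, Matrix.mul_add,
    Matrix.trace_add]
  rw [tr_sym B A]
  ring

lemma quad_pos {m n : ℕ} (N : Matrix (Fin n) (Fin n) ℝ) (hN : N.PosDef)
    (E : Matrix (Fin m) (Fin n) ℝ) (hE : E ≠ 0) :
    0 < Matrix.trace (Eᵀ * E * N) := by
  have h1 : Matrix.trace (Eᵀ * E * N) = Matrix.trace (E * N * Eᵀ) := by
    rw [Matrix.mul_assoc, Matrix.trace_mul_comm]
  rw [h1, Matrix.trace]
  have hrow : ∀ i, (E * N * Eᵀ).diag i = dotProduct (E i) (N *ᵥ (E i)) := by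
    intro i
    simp only [Matrix.diag_apply, Matrix.mul_apply, Matrix.transpose_apply,
      dotProduct, Matrix.mulVec, dotProduct]
    simp_rw [Finset.sum_mul, Finset.mul_sum]
    rw [Finset.sum_comm]
    exact Finset.sum_congr rfl fun x _ => Finset.sum_congr rfl fun y _ => by ring
  obtain ⟨i0, hi0⟩ : ∃ i, E i ≠ 0 := by
    by_contra h
    push_neg at h
    exact hE (by ext i j; simpa using congrFun (h i) j)
  refine Finset.sum_pos' (fun i _ => ?_) ⟨i0, Finset.mem_univ _, ?_⟩
  · rw [hrow i]
    have := hN.posSemidef.dotProduct_mulVec_nonneg (E i)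
    simpa using this
  · rw [hrow i0]
    have := hN.dotProduct_mulVec_pos hi0
    simpa using this

end BLDLaux

/-- Closed-form solution of the D-subproblem in the ADMM scheme for the BLDL model. -/
theorem stmt_2 (d n m : ℕ) (hd : 0 < d) (hn : 0 < n) (hm : 0 < m)
    (W : Matrix (Fin m) (Fin d) ℝ) (X : Matrix (Fin d) (Fin n) ℝ)
    (O : Matrix (Fin n) (Fin n) ℝ)
    (Lhat Dhat : Matrix (Fin m) (Fin n) ℝ)
    (α γ η : ℝ) (hα : 0 < α) (hγ : 0 < γ) (hη : 0 < η)
    (f : Matrix (Fin m) (Fin n) ℝ → ℝ)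
    (hf : ∀ D : Matrix (Fin m) (Fin n) ℝ,
      f D = α * frobSq (W * X - D) + γ * frobSq (D * O - Lhat) + η * frobSq (D - Dhat))
    (M : Matrix (Fin n) (Fin n) ℝ)
    (hM : M = (2 * (α + η)) • (1 : Matrix (Fin n) (Fin n) ℝ) + (2 * γ) • (O * Oᵀ))
    (Dstar : Matrix (Fin m) (Fin n) ℝ)
    (hDstar : Dstar = ((2 * α) • (W * X) + (2 * γ) • (Lhat * Oᵀ) + (2 * η) • Dhat) * M⁻¹) :
    M.PosDef ∧ IsUnit M ∧ (∀ D, f Dstar ≤ f D) ∧ (∀ D, f Dstar = f D → D = Dstar) := by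
  -- the "half" matrix N
  set N : Matrix (Fin n) (Fin n) ℝ := (α + η) • (1 : Matrix (Fin n) (Fin n) ℝ) + γ • (O * Oᵀ)
    with hNdef
  have hOOT : (O * Oᵀ).PosSemidef := by
    have := Matrix.posSemidef_self_mul_conjTranspose O
    simpa using this
  have h1pd : ((α + η) • (1 : Matrix (Fin n) (Fin n) ℝ)).PosDef := by
    refine Matrix.PosDef.of_dotProduct_mulVec_pos ?_ ?_
    · rw [Matrix.IsHermitian, Matrix.conjTranspose_smul, Matrix.conjTranspose_one]
      simp
    · intro x hx
      have hxx : 0 < dotProduct (star x) x := Matrix.dotProduct_star_self_pos_iff.mpr hx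
      simp only [Matrix.smul_mulVec, Matrix.one_mulVec, dotProduct_smul, smul_eq_mul]
      exact mul_pos (by linarith) hxx
  have hsemi : (γ • (O * Oᵀ)).PosSemidef := by
    refine Matrix.PosSemidef.of_dotProduct_mulVec_nonneg ?_ ?_
    · rw [Matrix.IsHermitian, Matrix.conjTranspose_smul, hOOT.isHermitian.eq]
      simp
    · intro x
      have := hOOT.dotProduct_mulVec_nonneg x
      simp only [Matrix.smul_mulVec, dotProduct_smul, smul_eq_mul]
      exact mul_nonneg hγ.le (by simpa using this)
  have hNpos : N.PosDef := h1pd.add_posSemidef hsemi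
  have hMN : M = (2 : ℝ) • N := by
    rw [hM, hNdef, smul_add, smul_smul, smul_smul]
  have hMpos : M.PosDef := by
    have h2 : M = N + N := by rw [hMN, two_smul]
    rw [h2]; exact hNpos.add hNpos
  have hMunit : IsUnit M := hMpos.isUnit
  have hMdet : IsUnit M.det := (Matrix.isUnit_iff_isUnit_det M).mp hMunit
  have hDM : Dstar * M = (2 * α) • (W * X) + (2 * γ) • (Lhat * Oᵀ) + (2 * η) • Dhat := by
    rw [hDstar, Matrix.mul_assoc, Matrix.nonsing_inv_mul M hMdet, Matrix.mul_one]
  have hDN : Dstar * N = α • (W * X) + γ • (Lhat * Oᵀ) + η • Dhat := by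
    have h2 : (2 : ℝ) • (Dstar * N) =
        (2 : ℝ) • (α • (W * X) + γ • (Lhat * Oᵀ) + η • Dhat) := by
      rw [← Matrix.mul_smul, ← hMN, hDM]
      simp only [smul_add, smul_smul]
    exact smul_right_injective _ (two_ne_zero) h2
  -- key identity
  have key : ∀ E : Matrix (Fin m) (Fin n) ℝ,
      f (Dstar + E) = f Dstar + Matrix.trace (Eᵀ * E * N) := by
    intro E
    have hquad : α * frobSq E + γ * frobSq (E * O) + η * frobSq E
        = Matrix.trace (Eᵀ * E * N) := by
      have hEO : frobSq (E * O) = Matrix.trace (Eᵀ * E * (O * Oᵀ)) := by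
        unfold frobSq
        rw [Matrix.transpose_mul, Matrix.mul_assoc, Matrix.trace_mul_comm]
        simp [Matrix.mul_assoc]
      rw [hEO, hNdef]
      simp only [Matrix.mul_add, Matrix.mul_smul, Matrix.mul_one, Matrix.trace_add,
        Matrix.trace_smul, smul_eq_mul, frobSq]
      ring
    have hDNexp : Dstar * N = (α + η) • Dstar + γ • (Dstar * (O * Oᵀ)) := by
      rw [hNdef, Matrix.mul_add, Matrix.mul_smul, Matrix.mul_one, Matrix.mul_smul]
    have hA : Matrix.trace ((Dstar * N)ᵀ * E)
        = (α + η) * Matrix.trace (Dstarᵀ * E)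
          + γ * Matrix.trace ((Dstar * (O * Oᵀ))ᵀ * E) := by
      rw [hDNexp]
      simp only [Matrix.transpose_add, Matrix.transpose_smul, Matrix.add_mul,
        Matrix.smul_mul, Matrix.trace_add, Matrix.trace_smul, smul_eq_mul]
    have hB : Matrix.trace ((Dstar * N)ᵀ * E)
        = α * Matrix.trace ((W * X)ᵀ * E) + γ * Matrix.trace ((Lhat * Oᵀ)ᵀ * E)
          + η * Matrix.trace (Dhatᵀ * E) := by
      rw [hDN]
      simp only [Matrix.transpose_add, Matrix.transpose_smul, Matrix.add_mul,
        Matrix.smul_mul, Matrix.trace_add, Matrix.trace_smul, smul_eq_mul]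
    have c1 : Matrix.trace ((Lhat * Oᵀ)ᵀ * E) = Matrix.trace (Lhatᵀ * (E * O)) :=
      BLDLaux.cyc1 Lhat E O
    have c2 : Matrix.trace ((Dstar * (O * Oᵀ))ᵀ * E)
        = Matrix.trace ((Dstar * O)ᵀ * (E * O)) := by
      rw [← Matrix.mul_assoc]
      exact BLDLaux.cyc1 (Dstar * O) E O
    have hcross : γ * Matrix.trace ((Dstar * O - Lhat)ᵀ * (E * O))
        + η * Matrix.trace ((Dstar - Dhat)ᵀ * E)
        = α * Matrix.trace ((W * X - Dstar)ᵀ * E) := by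
      simp only [Matrix.transpose_sub, Matrix.sub_mul, Matrix.trace_sub]
      linear_combination (hB - hA) + γ * c1 - γ * c2
    have e1 : W * X - (Dstar + E) = (W * X - Dstar) - E := by abel
    have e2 : (Dstar + E) * O - Lhat = (Dstar * O - Lhat) + E * O := by
      rw [Matrix.add_mul]; abel
    have e3 : (Dstar + E) - Dhat = (Dstar - Dhat) + E := by abel
    rw [hf (Dstar + E), hf Dstar, e1, e2, e3, BLDLaux.frob_sub, BLDLaux.frob_add,
      BLDLaux.frob_add]
    linear_combination hquad + 2 * hcross
  have key' : ∀ D, f D = f Dstar + Matrix.trace ((D - Dstar)ᵀ * (D - Dstar) * N) := by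
    intro D
    have := key (D - Dstar)
    rwa [show Dstar + (D - Dstar) = D from by abel] at this
  have hq0 : ∀ E : Matrix (Fin m) (Fin n) ℝ, 0 ≤ Matrix.trace (Eᵀ * E * N) := by
    intro E
    by_cases h : E = 0
    · simp [h]
    · exact (BLDLaux.quad_pos N hNpos E h).le
  refine ⟨hMpos, hMunit, fun D => ?_, fun D hfd => ?_⟩
  · rw [key' D]
    exact le_add_of_nonneg_right (hq0 _)
  · by_contra hne
    have hEne : D - Dstar ≠ 0 := sub_ne_zero.mpr hne
    have hpos := BLDLaux.quad_pos N hNpos (D - Dstar) hEne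
    have := key' D
    rw [← hfd] at this
    linarith
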